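/- Let Y = (Y_t)_{t∈[0,1]} be a standard Poisson process on [0,1]. Then there is no nonzero deterministic function ψ : [0,1] → R for which there exists a nonnegative random variable η with E[η] = 1 such that E[F((Y_t + ψ(t))_{t∈[0,1]})] = E[F((Y_t)_{t∈[0,1]}) η] for all bounded measurable functionals F : R^{[0,1]} → R. -/

import Mathlib

open MeasureTheory ProbabilityTheory Set
open scoped ENNReal

lemma aux_poisson_tsum (δ : ℝ) (hδ : 0 ≤ δ) :
    ∑' k : ℕ, ENNReal.ofReal (Real.exp (-δ) * δ ^ k / (Nat.factorial k)) = 1 := by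
  have hsummable : Summable (fun k : ℕ => Real.exp (-δ) * δ ^ k / (Nat.factorial k)) := by
    simpa [mul_div_assoc] using (Real.summable_pow_div_factorial δ).mul_left (Real.exp (-δ))
  have hnonneg : ∀ k : ℕ, 0 ≤ Real.exp (-δ) * δ ^ k / (Nat.factorial k) := fun k => by
    positivity
  rw [← ENNReal.ofReal_tsum_of_nonneg hnonneg hsummable]
  have : ∑' k : ℕ, Real.exp (-δ) * δ ^ k / (Nat.factorial k)
      = Real.exp (-δ) * ∑' k : ℕ, δ ^ k / (Nat.factorial k) := by
    simp_rw [mul_div_assoc]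
    exact tsum_mul_left
  rw [this]
  have hexp : ∑' k : ℕ, δ ^ k / (Nat.factorial k : ℝ) = Real.exp δ := by
    rw [Real.exp_eq_exp_ℝ, NormedSpace.exp_eq_tsum_div]
  rw [hexp, ← Real.exp_add]
  simp

lemma aux_trunc {Ω : Type*} [MeasurableSpace Ω] (P : Measure Ω) [IsProbabilityMeasure P]
    {η : Ω → ℝ} (hint : Integrable η P) :
    ∃ M : ℝ, 0 ≤ M ∧ ∫ ω, max (η ω - M) 0 ∂P < 1/2 := by
  have htend : Filter.Tendsto (fun n : ℕ => ∫ ω, max (η ω - n) 0 ∂P)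
      Filter.atTop (nhds (∫ _ω, (0:ℝ) ∂P)) := by
    apply MeasureTheory.tendsto_integral_of_dominated_convergence (fun ω => |η ω|)
    · intro n
      exact ((hint.sub (integrable_const _)).pos_part).aestronglyMeasurable
    · exact hint.abs
    · intro n
      filter_upwards with ω
      rw [Real.norm_eq_abs, abs_of_nonneg (le_max_right _ _)]
      rcases le_total (η ω - n) 0 with h | h
      · simpa [max_eq_right h] using abs_nonneg (η ω)
      · rw [max_eq_left h]
        have h1 : (0:ℝ) ≤ n := Nat.cast_nonneg n
        have h2 := le_abs_self (η ω)
        linarith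
    · filter_upwards with ω
      apply Filter.Tendsto.congr' (f₁ := fun _ => (0:ℝ))
      · rw [Filter.eventuallyEq_iff_exists_mem]
        refine ⟨{n : ℕ | η ω ≤ n}, ?_, fun n hn => (max_eq_right (sub_nonpos.mpr hn)).symm⟩
        rw [Filter.mem_atTop_sets]
        exact ⟨⌈η ω⌉₊, fun n hn => le_trans (Nat.le_ceil _) (Nat.cast_le.mpr hn)⟩
      · exact tendsto_const_nhds
  rw [integral_zero] at htend
  obtain ⟨n, hn⟩ := (htend.eventually_lt_const (by norm_num : (0:ℝ) < 1/2)).exists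
  exact ⟨n, Nat.cast_nonneg n, hn⟩

/-- For a rate-1 Poisson process `Y` on `[0,1]` there is no nonzero deterministic
function `ψ : [0,1] → ℝ` and nonnegative random variable `η` with `E[η] = 1` such that
`E[F(Y + ψ)] = E[F(Y) η]` for all bounded measurable functionals `F`. -/
theorem no_deterministic_translation_of_poisson_process
    {Ω : Type*} [MeasurableSpace Ω] (P : Measure Ω) [IsProbabilityMeasure P]
    (Y : Ω → ℝ → ℝ)
    (hYmeas : ∀ t : ℝ, Measurable fun ω => Y ω t)
    (hY0 : ∀ᵐ ω ∂P, Y ω 0 = 0)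
    (hindep : ∀ (n : ℕ) (t : Fin (n + 1) → ℝ), Monotone t →
      (∀ i, t i ∈ Set.Icc (0 : ℝ) 1) →
      iIndepFun
        (fun (i : Fin n) (ω : Ω) => Y ω (t i.succ) - Y ω (t i.castSucc)) P)
    (hpois : ∀ s t : ℝ, 0 ≤ s → s ≤ t → t ≤ 1 → ∀ k : ℕ,
      P {ω | Y ω t - Y ω s = (k : ℝ)} =
        ENNReal.ofReal (Real.exp (-(t - s)) * (t - s) ^ k / (Nat.factorial k))) :
    ¬ ∃ (ψ : ℝ → ℝ) (η : Ω → ℝ),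
        (∃ t ∈ Set.Icc (0 : ℝ) 1, ψ t ≠ 0) ∧
        (∀ ω, 0 ≤ η ω) ∧ (∫ ω, η ω ∂P = 1) ∧
        ∀ F : (Set.Icc (0 : ℝ) 1 → ℝ) → ℝ, Measurable F → (∃ C, ∀ x, |F x| ≤ C) →
          ∫ ω, F (fun t => Y ω ↑t + ψ ↑t) ∂P =
            ∫ ω, F (fun t => Y ω ↑t) * η ω ∂P := by
  rintro ⟨ψ, η, ⟨t₀, ht₀, hψt₀⟩, hη0, hη1, hid⟩
  have hηint : Integrable η P := by
    by_contra h
    rw [integral_undef h] at hη1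
    norm_num at hη1
  -- measurability of path maps
  have hpthm : Measurable (fun ω => (fun t : Set.Icc (0:ℝ) 1 => Y ω ↑t)) :=
    measurable_pi_lambda _ fun t => hYmeas ↑t
  have hpthψm : Measurable (fun ω => (fun t : Set.Icc (0:ℝ) 1 => Y ω ↑t + ψ ↑t)) :=
    measurable_pi_lambda _ fun t => (hYmeas ↑t).add_const _
  -- a.e. membership gives probability one
  have aeProb : ∀ S : Set Ω, (∀ᵐ ω ∂P, ω ∈ S) → P S = 1 := by
    intro S hae
    rw [← measure_univ (μ := P)]
    exact measure_congr (ae_eq_univ.mpr (ae_iff.mp hae))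
  -- the key identity, specialized to indicator functionals
  have key : ∀ T : Set (Set.Icc (0:ℝ) 1 → ℝ), MeasurableSet T →
      (P {ω | (fun t : Set.Icc (0:ℝ) 1 => Y ω ↑t + ψ ↑t) ∈ T}).toReal
        = ∫ ω in {ω | (fun t : Set.Icc (0:ℝ) 1 => Y ω ↑t) ∈ T}, η ω ∂P := by
    intro T hT
    have hA : MeasurableSet {ω | (fun t : Set.Icc (0:ℝ) 1 => Y ω ↑t + ψ ↑t) ∈ T} := hpthψm hT
    have hB : MeasurableSet {ω | (fun t : Set.Icc (0:ℝ) 1 => Y ω ↑t) ∈ T} := hpthm hT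
    have hFm : Measurable (T.indicator fun _ => (1:ℝ)) := measurable_const.indicator hT
    have hFb : ∃ C, ∀ x, |T.indicator (fun _ => (1:ℝ)) x| ≤ C :=
      ⟨1, fun x => by by_cases hx : x ∈ T <;> simp [Set.indicator_apply, hx]⟩
    have h := hid (T.indicator fun _ => (1:ℝ)) hFm hFb
    have hL : ∀ ω, T.indicator (fun _ => (1:ℝ)) (fun t : Set.Icc (0:ℝ) 1 => Y ω ↑t + ψ ↑t)
        = {ω | (fun t : Set.Icc (0:ℝ) 1 => Y ω ↑t + ψ ↑t) ∈ T}.indicator (fun _ => (1:ℝ)) ω := by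
      intro ω
      by_cases hx : (fun t : Set.Icc (0:ℝ) 1 => Y ω ↑t + ψ ↑t) ∈ T <;>
        simp [Set.indicator_apply, hx]
    have hR : ∀ ω, T.indicator (fun _ => (1:ℝ)) (fun t : Set.Icc (0:ℝ) 1 => Y ω ↑t) * η ω
        = {ω | (fun t : Set.Icc (0:ℝ) 1 => Y ω ↑t) ∈ T}.indicator η ω := by
      intro ω
      by_cases hx : (fun t : Set.Icc (0:ℝ) 1 => Y ω ↑t) ∈ T <;>
        simp [Set.indicator_apply, hx]
    simp_rw [hL, hR] at h
    rw [MeasureTheory.integral_indicator_const (1:ℝ) hA, smul_eq_mul, mul_one] at h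
    rw [MeasureTheory.integral_indicator hB] at h
    exact h
  -- transfer of null sets and full sets
  have nul : ∀ T : Set (Set.Icc (0:ℝ) 1 → ℝ), MeasurableSet T →
      P {ω | (fun t : Set.Icc (0:ℝ) 1 => Y ω ↑t) ∈ T} = 0 →
      P {ω | (fun t : Set.Icc (0:ℝ) 1 => Y ω ↑t + ψ ↑t) ∈ T} = 0 := by
    intro T hT h0
    have h2 : (P {ω | (fun t : Set.Icc (0:ℝ) 1 => Y ω ↑t + ψ ↑t) ∈ T}).toReal = 0 := by
      rw [key T hT, Measure.restrict_eq_zero.mpr h0, integral_zero_measure]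
    exact ((ENNReal.toReal_eq_zero_iff _).mp h2).resolve_right (measure_ne_top P _)
  have one : ∀ T : Set (Set.Icc (0:ℝ) 1 → ℝ), MeasurableSet T →
      P {ω | (fun t : Set.Icc (0:ℝ) 1 => Y ω ↑t + ψ ↑t) ∈ T} = 1 →
      ∫ ω in {ω | (fun t : Set.Icc (0:ℝ) 1 => Y ω ↑t) ∈ T}, η ω ∂P = 1 := by
    intro T hT h1
    rw [← key T hT, h1, ENNReal.toReal_one]
  -- measurability of level sets of increments
  have hkmeas : ∀ s t : ℝ, ∀ k : ℕ, MeasurableSet {ω | Y ω t - Y ω s = (k:ℝ)} := by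
    intro s t k
    exact ((hYmeas t).sub (hYmeas s)) (measurableSet_singleton _)
  -- increments are a.s. natural numbers
  have incrN : ∀ s t : ℝ, 0 ≤ s → s ≤ t → t ≤ 1 →
      ∀ᵐ ω ∂P, ∃ n : ℕ, Y ω t - Y ω s = (n:ℝ) := by
    intro s t hs hst ht1
    have hdisj : Pairwise (Function.onFun Disjoint
        (fun k : ℕ => {ω | Y ω t - Y ω s = (k:ℝ)})) := by
      intro i j hij
      rw [Function.onFun, Set.disjoint_left]
      intro ω h1 h2
      exact hij (Nat.cast_injective (h1.symm.trans h2))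
    have hsum : P (⋃ k : ℕ, {ω | Y ω t - Y ω s = (k:ℝ)}) = 1 := by
      rw [measure_iUnion hdisj (hkmeas s t)]
      simp_rw [hpois s t hs hst ht1]
      exact aux_poisson_tsum (t - s) (by linarith)
    have hcompl : P ((⋃ k : ℕ, {ω | Y ω t - Y ω s = (k:ℝ)})ᶜ) = 0 := by
      rw [measure_compl (MeasurableSet.iUnion (hkmeas s t)) (measure_ne_top _ _), hsum]
      simp [measure_univ]
    rw [ae_iff]
    convert hcompl using 2
    ext ω
    simp [Set.mem_iUnion]
  -- nonneg increments
  have incr0 : ∀ s t : ℝ, 0 ≤ s → s ≤ t → t ≤ 1 →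
      ∀ᵐ ω ∂P, 0 ≤ Y ω t - Y ω s := by
    intro s t hs hst ht1
    filter_upwards [incrN s t hs hst ht1] with ω hn
    obtain ⟨n, hn⟩ := hn
    rw [hn]; exact Nat.cast_nonneg n
  -- P(Y t = 0) ≥ exp(-t)
  have zeroLB : ∀ t : ℝ, 0 ≤ t → t ≤ 1 →
      ENNReal.ofReal (Real.exp (-t)) ≤ P {ω | Y ω t = 0} := by
    intro t ht0 ht1
    have h0 : P {ω | Y ω t - Y ω 0 = (0:ℝ)} = ENNReal.ofReal (Real.exp (-t)) := by
      have := hpois 0 t le_rfl ht0 ht1 0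
      simpa using this
    have hsub : {ω | Y ω t - Y ω 0 = ((0:ℕ):ℝ)} ∩ {ω | Y ω 0 = 0} ⊆ {ω | Y ω t = 0} := by
      intro ω hω
      obtain ⟨h1, h2⟩ := hω
      simp only [Set.mem_setOf_eq] at *
      push_cast at h1
      linarith
    calc ENNReal.ofReal (Real.exp (-t)) = P {ω | Y ω t - Y ω 0 = ((0:ℕ):ℝ)} := by
          rw [← h0]; norm_num
      _ = P ({ω | Y ω t - Y ω 0 = ((0:ℕ):ℝ)} ∩ {ω | Y ω 0 = 0}) :=
          (measure_inter_conull (by rw [Set.compl_setOf]; exact ae_iff.mp hY0)).symm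
      _ ≤ P {ω | Y ω t = 0} := measure_mono hsub
  -- P(Y t - Y s ≥ 1) ≤ t - s
  have jumpUB : ∀ s t : ℝ, 0 ≤ s → s ≤ t → t ≤ 1 →
      P {ω | 1 ≤ Y ω t - Y ω s} ≤ ENNReal.ofReal (t - s) := by
    intro s t hs hst ht1
    have h0 : P {ω | Y ω t - Y ω s = ((0:ℕ):ℝ)}
        = ENNReal.ofReal (Real.exp (-(t - s))) := by
      have := hpois s t hs hst ht1 0
      simpa using this
    have hdisj : Disjoint {ω | 1 ≤ Y ω t - Y ω s} {ω | Y ω t - Y ω s = ((0:ℕ):ℝ)} := by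
      rw [Set.disjoint_left]
      intro ω h1 h2
      simp only [Set.mem_setOf_eq] at *
      push_cast at h2
      linarith
    have hle1 : P {ω | 1 ≤ Y ω t - Y ω s} + P {ω | Y ω t - Y ω s = ((0:ℕ):ℝ)} ≤ 1 := by
      rw [← measure_union hdisj (hkmeas s t 0)]
      exact prob_le_one
    have h2 : P {ω | 1 ≤ Y ω t - Y ω s} ≤ 1 - ENNReal.ofReal (Real.exp (-(t - s))) := by
      rw [← h0]
      exact ENNReal.le_sub_of_add_le_right (measure_ne_top P _) hle1
    refine h2.trans ?_
    rw [tsub_le_iff_right, ← ENNReal.ofReal_add (by linarith) (Real.exp_pos _).le,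
      ← ENNReal.ofReal_one]
    apply ENNReal.ofReal_le_ofReal
    have := Real.add_one_le_exp (-(t - s))
    linarith
  -- ψ takes values in ℕ on [0,1]
  have ψnat : ∀ t : ℝ, 0 ≤ t → t ≤ 1 → ∃ n : ℕ, ψ t = n := by
    intro t ht0 ht1
    have hNm : MeasurableSet (Set.range ((↑) : ℕ → ℝ)) :=
      (Set.countable_range _).measurableSet
    set T : Set (Set.Icc (0:ℝ) 1 → ℝ) :=
      (fun x : Set.Icc (0:ℝ) 1 → ℝ => x ⟨t, Set.mem_Icc.mpr ⟨ht0, ht1⟩⟩) ⁻¹'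
        (Set.range ((↑) : ℕ → ℝ))ᶜ with hTdef
    have hT : MeasurableSet T := (measurable_pi_apply _) hNm.compl
    have hae : ∀ᵐ ω ∂P, Y ω t ∈ Set.range ((↑) : ℕ → ℝ) := by
      filter_upwards [incrN 0 t le_rfl ht0 ht1, hY0] with ω hn h0
      obtain ⟨n, hn⟩ := hn
      exact ⟨n, by rw [h0, sub_zero] at hn; exact hn.symm⟩
    have hBnull : P {ω | (fun u : Set.Icc (0:ℝ) 1 => Y ω ↑u) ∈ T} = 0 := by
      apply measure_mono_null ?_ (ae_iff.mp hae)
      intro ω hω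
      simpa [hTdef] using hω
    have hψnull := nul T hT hBnull
    have hψae : ∀ᵐ ω ∂P, Y ω t + ψ t ∈ Set.range ((↑) : ℕ → ℝ) := by
      rw [ae_iff]
      apply measure_mono_null ?_ hψnull
      intro ω hω
      simpa [hTdef] using hω
    have hpos : P {ω | Y ω t = 0} ≠ 0 := by
      intro h
      have := zeroLB t ht0 ht1
      rw [h, nonpos_iff_eq_zero, ENNReal.ofReal_eq_zero] at this
      exact absurd this (not_le.mpr (Real.exp_pos _))
    have hinter : P ({ω | Y ω t = 0} ∩ {ω | Y ω t + ψ t ∈ Set.range ((↑) : ℕ → ℝ)}) ≠ 0 := by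
      rw [measure_inter_conull (by rw [Set.compl_setOf]; exact ae_iff.mp hψae)]
      exact hpos
    obtain ⟨ω, hω0, hωN⟩ := nonempty_of_measure_ne_zero hinter
    obtain ⟨n, hn⟩ := hωN
    simp only [Set.mem_setOf_eq] at hω0
    exact ⟨n, by rw [hω0, zero_add] at hn; exact hn.symm⟩
  -- ψ 0 = 0
  have ψzero : ψ 0 = 0 := by
    by_contra h
    set T : Set (Set.Icc (0:ℝ) 1 → ℝ) :=
      (fun x : Set.Icc (0:ℝ) 1 → ℝ => x ⟨0, Set.mem_Icc.mpr ⟨le_rfl, zero_le_one⟩⟩) ⁻¹'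
        ({0}ᶜ) with hTdef
    have hT : MeasurableSet T := (measurable_pi_apply _) (measurableSet_singleton (0:ℝ)).compl
    have h1 : P {ω | (fun u : Set.Icc (0:ℝ) 1 => Y ω ↑u + ψ ↑u) ∈ T} = 1 := by
      apply aeProb
      filter_upwards [hY0] with ω hω
      simp only [hTdef, Set.mem_setOf_eq, Set.mem_preimage, Set.mem_compl_iff,
        Set.mem_singleton_iff]
      rw [hω, zero_add]
      exact h
    have h2 := one T hT h1
    have h3 : P {ω | (fun u : Set.Icc (0:ℝ) 1 => Y ω ↑u) ∈ T} = 0 := by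
      apply measure_mono_null ?_ (ae_iff.mp hY0)
      intro ω hω
      simpa [hTdef] using hω
    rw [Measure.restrict_eq_zero.mpr h3, integral_zero_measure] at h2
    norm_num at h2
  -- ψ u ≠ 0 on [0,1] implies 1 ≤ ψ u
  have hge1 : ∀ u : ℝ, 0 ≤ u → u ≤ 1 → ψ u ≠ 0 → 1 ≤ ψ u := by
    intro u h0 h1 hne
    obtain ⟨n, hn⟩ := ψnat u h0 h1
    rw [hn] at hne ⊢
    have hn0 : n ≠ 0 := by
      intro hk
      rw [hk] at hne
      simp at hne
    exact_mod_cast Nat.one_le_iff_ne_zero.mpr hn0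
  -- truncation level
  obtain ⟨M, hM0, hMtr⟩ := aux_trunc P hηint
  set ε : ℝ := 1/(4*(M+1)) with hεdef
  have hεpos : 0 < ε := by positivity
  -- find a short interval with a unit jump of ψ
  obtain ⟨s, t, hs0, hst, ht1, hts, hjump⟩ :
      ∃ s t : ℝ, 0 ≤ s ∧ s ≤ t ∧ t ≤ 1 ∧ t - s ≤ ε ∧ 1 ≤ ψ t - ψ s := by
    set A : Set ℝ := {u | 0 ≤ u ∧ u ≤ 1 ∧ ψ u ≠ 0} with hA
    have hAne : A.Nonempty := ⟨t₀, ht₀.1, ht₀.2, hψt₀⟩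
    have hAbdd : BddBelow A := ⟨0, fun u hu => hu.1⟩
    set c := sInf A with hc
    have hc0 : 0 ≤ c := le_csInf hAne fun u hu => hu.1
    have hc1 : c ≤ 1 := le_trans (csInf_le hAbdd ⟨ht₀.1, ht₀.2, hψt₀⟩) ht₀.2
    by_cases hψc : ψ c = 0
    · obtain ⟨t, htA, htlt⟩ := exists_lt_of_csInf_lt hAne (lt_add_of_pos_right c hεpos)
      refine ⟨c, t, hc0, csInf_le hAbdd htA, htA.2.1, by linarith, ?_⟩
      have := hge1 t htA.1 htA.2.1 htA.2.2
      rw [hψc]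
      linarith
    · have hcpos : 0 < c := by
        rcases lt_or_eq_of_le hc0 with h | h
        · exact h
        · exact absurd (h ▸ ψzero) hψc
      set s := max 0 (c - ε) with hs
      have hs0 : 0 ≤ s := le_max_left _ _
      have hsc : s < c := max_lt hcpos (by linarith)
      have hψs : ψ s = 0 := by
        by_contra hne
        have hmem : s ∈ A := ⟨hs0, by linarith, hne⟩
        exact absurd (csInf_le hAbdd hmem) (not_le.mpr hsc)
      refine ⟨s, c, hs0, hsc.le, hc1, ?_, ?_⟩
      · have := le_max_right 0 (c - ε)
        rw [hs]
        linarith [le_max_right 0 (c - ε)]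
      · rw [hψs]
        have := hge1 c hc0 hc1 hψc
        linarith
  -- the contradiction
  have hsIcc : s ∈ Set.Icc (0:ℝ) 1 := Set.mem_Icc.mpr ⟨hs0, le_trans hst ht1⟩
  have htIcc : t ∈ Set.Icc (0:ℝ) 1 := Set.mem_Icc.mpr ⟨le_trans hs0 hst, ht1⟩
  set T : Set (Set.Icc (0:ℝ) 1 → ℝ) :=
    {x | 1 ≤ x ⟨t, htIcc⟩ - x ⟨s, hsIcc⟩} with hTdef
  have hTm : MeasurableSet T :=
    measurableSet_le measurable_const ((measurable_pi_apply (⟨t, htIcc⟩ : Set.Icc (0:ℝ) 1)).sub (measurable_pi_apply (⟨s, hsIcc⟩ : Set.Icc (0:ℝ) 1)))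
  have hshift1 : P {ω | (fun u : Set.Icc (0:ℝ) 1 => Y ω ↑u + ψ ↑u) ∈ T} = 1 := by
    apply aeProb
    filter_upwards [incr0 s t hs0 hst ht1] with ω hω
    show 1 ≤ (Y ω t + ψ t) - (Y ω s + ψ s)
    linarith
  have hone := one T hTm hshift1
  have hBeq : {ω | (fun u : Set.Icc (0:ℝ) 1 => Y ω ↑u) ∈ T} = {ω | 1 ≤ Y ω t - Y ω s} := rfl
  rw [hBeq] at hone
  have hBm : MeasurableSet {ω | 1 ≤ Y ω t - Y ω s} :=
    ((hYmeas t).sub (hYmeas s)) measurableSet_Ici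
  have hPB : (P {ω | 1 ≤ Y ω t - Y ω s}).toReal ≤ t - s :=
    ENNReal.toReal_le_of_le_ofReal (by linarith) (jumpUB s t hs0 hst ht1)
  have hg : Integrable (fun ω => max (η ω - M) 0) P :=
    (hηint.sub (integrable_const _)).pos_part
  have hmono : ∫ ω in {ω | 1 ≤ Y ω t - Y ω s}, η ω ∂P
      ≤ ∫ ω in {ω | 1 ≤ Y ω t - Y ω s}, (max (η ω - M) 0 + M) ∂P := by
    apply setIntegral_mono_on hηint.integrableOn
      ((hg.add (integrable_const M)).integrableOn) hBm
    intro ω _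
    show η ω ≤ max (η ω - M) 0 + M
    rcases le_total (η ω) M with hh | hh
    · have := le_max_right (η ω - M) 0
      linarith
    · have hmax : max (η ω - M) 0 = η ω - M := max_eq_left (by linarith)
      rw [hmax]
      linarith
  have hsplit : ∫ ω in {ω | 1 ≤ Y ω t - Y ω s}, (max (η ω - M) 0 + M) ∂P
      = (∫ ω in {ω | 1 ≤ Y ω t - Y ω s}, max (η ω - M) 0 ∂P)
        + (P {ω | 1 ≤ Y ω t - Y ω s}).toReal * M := by
    rw [integral_add hg.integrableOn (integrable_const M).integrableOn, setIntegral_const,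
      smul_eq_mul, measureReal_def]
  have hsub : ∫ ω in {ω | 1 ≤ Y ω t - Y ω s}, max (η ω - M) 0 ∂P
      ≤ ∫ ω, max (η ω - M) 0 ∂P :=
    setIntegral_le_integral hg (by filter_upwards with ω; exact le_max_right _ _)
  have hεM : (P {ω | 1 ≤ Y ω t - Y ω s}).toReal * M ≤ 1/4 := by
    have h1 : (P {ω | 1 ≤ Y ω t - Y ω s}).toReal * M ≤ ε * M :=
      mul_le_mul_of_nonneg_right (hPB.trans hts) hM0
    have h2 : ε * M ≤ 1/4 := by
      rw [hεdef]
      rw [div_mul_eq_mul_div, div_le_div_iff₀ (by positivity) (by norm_num)]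
      nlinarith
    linarith
  linarith [hone, hmono, hsplit, hsub, hεM, hMtr]
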